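/- Let p ≥ 1, let Q be a Borel probability measure on ℝᵖ that is absolutely continuous with respect to Lebesgue measure, let y ∈ ℝᵖ, and let c > 0 be such that Q({x : ⟨u, x − y⟩ ≥ 0}) ≥ c for every unit vector u. Then every closed convex set C ⊆ ℝᵖ with Q(C) > 1 − c contains y in its interior. -/

import Mathlib

open MeasureTheory
open scoped ENNReal

/-- a step in the proof of the paper's Lemma 3.1. If every closed
halfspace through `y` has `Q`-measure at least `c > 0`, then every closed convex set
of `Q`-measure greater than `1 − c` contains `y` in its interior. -/
theorem stmt14 (p : ℕ) (hp : 1 ≤ p)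
    (Q : Measure (EuclideanSpace ℝ (Fin p))) [IsProbabilityMeasure Q]
    (habs : Q ≪ volume)
    (y : EuclideanSpace ℝ (Fin p))
    (c : ℝ) (hc : 0 < c)
    (hhalf : ∀ u : EuclideanSpace ℝ (Fin p), ‖u‖ = 1 →
      ENNReal.ofReal c ≤ Q {x | 0 ≤ (inner ℝ u (x - y) : ℝ)})
    (C : Set (EuclideanSpace ℝ (Fin p)))
    (hCcl : IsClosed C) (hCconv : Convex ℝ C)
    (hCQ : ENNReal.ofReal (1 - c) < Q C) :
    y ∈ interior C := by
  by_contra hy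
  -- Case 1: the interior of `C` is empty, then `C` lies in a proper affine subspace
  rcases Set.eq_empty_or_nonempty (interior C) with hint | ⟨x₀, hx₀⟩
  · have hspan : affineSpan ℝ C ≠ ⊤ := by
      intro h
      rw [← hCconv.interior_nonempty_iff_affineSpan_eq_top] at h
      exact h.ne_empty hint
    have hvol : volume C = 0 :=
      measure_mono_null (subset_affineSpan ℝ C)
        (Measure.addHaar_affineSubspace volume _ hspan)
    have hQ0 : Q C = 0 := habs hvol
    rw [hQ0] at hCQ
    exact absurd hCQ (by simp)
  -- Case 2: separating functional
  obtain ⟨f, hf⟩ := geometric_hahn_banach_open_point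
    (hCconv.interior) isOpen_interior hy
  have hfa : ∀ a ∈ C, f a ≤ f y := by
    intro a ha
    have key : ∀ t : ℝ, 0 < t → t ≤ 1 → f a + t * (f x₀ - f a) < f y := by
      intro t ht ht1
      have hmem : (1 - t) • a + t • x₀ ∈ interior C :=
        hCconv.combo_closure_interior_mem_interior (subset_closure ha) hx₀
          (by linarith) ht (by ring)
      have h2 : f ((1 - t) • a + t • x₀) = f a + t * (f x₀ - f a) := by
        simp only [map_add, ContinuousLinearMap.map_smul, smul_eq_mul]; ring
      have := hf _ hmem
      rw [h2] at this
      exact this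
    have htend : Filter.Tendsto (fun t : ℝ => f a + t * (f x₀ - f a))
        (nhdsWithin 0 (Set.Ioi 0)) (nhds (f a)) := by
      have hcont : Continuous fun t : ℝ => f a + t * (f x₀ - f a) := by continuity
      have h := (hcont.tendsto 0).mono_left
        (nhdsWithin_le_nhds (s := Set.Ioi (0:ℝ)))
      simpa using h
    refine le_of_tendsto htend ?_
    filter_upwards [Ioo_mem_nhdsGT_of_mem
      (Set.mem_Ico.mpr ⟨le_refl (0:ℝ), one_pos⟩)] with t ht
    exact (key t ht.1 ht.2.le).le
  have hfne : f ≠ 0 := by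
    intro h
    have := hf x₀ hx₀
    rw [h] at this
    simp at this
  -- Riesz representation
  set v : EuclideanSpace ℝ (Fin p) := (InnerProductSpace.toDual ℝ _).symm f with hv
  have hvx : ∀ x, (inner ℝ v x : ℝ) = f x := fun x => InnerProductSpace.toDual_symm_apply
  have hv0 : v ≠ 0 := by
    intro h
    apply hfne
    ext x
    have := hvx x
    rw [h] at this
    simpa using this.symm
  have hvn : ‖v‖ ≠ 0 := norm_ne_zero_iff.mpr hv0
  set u : EuclideanSpace ℝ (Fin p) := ‖v‖⁻¹ • v with hu
  have hu1 : ‖u‖ = 1 := by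
    rw [hu, norm_smul, norm_inv, norm_norm, inv_mul_cancel₀ hvn]
  set g : EuclideanSpace ℝ (Fin p) → ℝ := fun x => (inner ℝ u (x - y) : ℝ) with hgdef
  have hg : ∀ x, g x = ‖v‖⁻¹ * (f x - f y) := by
    intro x
    rw [hgdef]
    simp only [hu, real_inner_smul_left]
    rw [hvx (x - y), map_sub]
  have hgcont : Continuous g := by
    apply Continuous.inner continuous_const
    exact continuous_id.sub continuous_const
  -- C lies in the nonpositive halfspace
  have hCsub : C ⊆ {x | g x ≤ 0} := by
    intro a ha
    have : f a - f y ≤ 0 := sub_nonpos.mpr (hfa a ha)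
    simp only [Set.mem_setOf_eq, hg a]
    exact mul_nonpos_of_nonneg_of_nonpos (inv_nonneg.mpr (norm_nonneg v)) this
  -- the hyperplane is null
  have hplane : Q {x | g x = 0} = 0 := by
    apply habs
    have hsub : {x | g x = 0} ⊆
        (AffineSubspace.mk' y (LinearMap.ker (innerSL ℝ u : EuclideanSpace ℝ (Fin p) →ₗ[ℝ] ℝ)) :
          Set (EuclideanSpace ℝ (Fin p))) := by
      intro x hx
      rw [AffineSubspace.mem_coe, AffineSubspace.mem_mk']
      simpa [LinearMap.mem_ker] using hx
    refine measure_mono_null hsub (Measure.addHaar_affineSubspace volume _ ?_)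
    intro htop
    have hmem : y + u ∈ (AffineSubspace.mk' y (LinearMap.ker (innerSL ℝ u : EuclideanSpace ℝ (Fin p) →ₗ[ℝ] ℝ)) :
        Set (EuclideanSpace ℝ (Fin p))) := by
      rw [htop]; simp
    rw [AffineSubspace.mem_coe, AffineSubspace.mem_mk'] at hmem
    simp only [vsub_eq_sub, add_sub_cancel_left, LinearMap.mem_ker] at hmem
    rw [ContinuousLinearMap.coe_coe, innerSL_apply_apply, real_inner_self_eq_norm_sq, hu1] at hmem
    norm_num at hmem
  -- measure arithmetic
  have hmeasA : MeasurableSet {x | 0 ≤ g x} :=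
    (isClosed_le continuous_const hgcont).measurableSet
  have hcompl : {x | 0 ≤ g x}ᶜ = {x | g x < 0} := by
    ext x; simp [not_le]
  have hsplit : Q {x | 0 ≤ g x} + Q {x | g x < 0} = 1 := by
    rw [← hcompl, measure_add_measure_compl hmeasA, measure_univ]
  have hA : ENNReal.ofReal c ≤ Q {x | 0 ≤ g x} := hhalf u hu1
  have h1 : Q C ≤ Q {x | g x < 0} := by
    calc Q C ≤ Q {x | g x ≤ 0} := measure_mono hCsub
    _ ≤ Q ({x | g x < 0} ∪ {x | g x = 0}) := by
        apply measure_mono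
        intro x hx
        rcases lt_or_eq_of_le (show g x ≤ 0 from hx) with h | h
        · exact Or.inl h
        · exact Or.inr h
    _ ≤ Q {x | g x < 0} + Q {x | g x = 0} := measure_union_le _ _
    _ = Q {x | g x < 0} := by rw [hplane, add_zero]
  have h3 : Q C + ENNReal.ofReal c ≤ 1 := by
    have step : Q C + ENNReal.ofReal c ≤ Q {x | g x < 0} + Q {x | 0 ≤ g x} :=
      add_le_add h1 hA
    rw [add_comm (Q {x | g x < 0})] at step
    rwa [hsplit] at step
  have h4 : Q C ≤ 1 - ENNReal.ofReal c := ENNReal.le_sub_of_add_le_right ENNReal.ofReal_ne_top h3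
  have h5 : (1 : ℝ≥0∞) - ENNReal.ofReal c = ENNReal.ofReal (1 - c) := by
    rw [← ENNReal.ofReal_one, ← ENNReal.ofReal_sub _ hc.le]
  rw [h5] at h4
  exact absurd hCQ (not_lt.mpr h4)
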